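/- Let (R, m) be a Cohen-Macaulay local ring of dimension one and I a regular ideal of R. If R : I ⊆ R̄ (i.e. every α in the total quotient ring Q(R) with αI ⊆ R is integral over R), then I is a reduction of tr_R(I); that is, tr_R(I)^{n+1} = I · tr_R(I)^n for some n > 0. -/

import Mathlib

/-- The trace ideal `tr_R(M) = Σ_{f ∈ Hom_R(M,R)} Im f`. -/
noncomputable def traceIdeal (R M : Type*) [CommRing R] [AddCommGroup M] [Module R M] : Ideal R :=
  ⨆ f : M →ₗ[R] R, LinearMap.range f

/-- The colon `R : I` as a submodule of the total quotient ring. -/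
def colonSub (R : Type*) [CommRing R] (I : Ideal R) : Submodule R (FractionRing R) where
  carrier := {α | ∀ y ∈ I, ∃ r : R,
    algebraMap R (FractionRing R) r = α * algebraMap R (FractionRing R) y}
  add_mem' := by
    intro a b ha hb y hy
    obtain ⟨r, hr⟩ := ha y hy
    obtain ⟨s, hs⟩ := hb y hy
    exact ⟨r + s, by rw [map_add, hr, hs, add_mul]⟩
  zero_mem' := fun y hy => ⟨0, by simp⟩
  smul_mem' := by
    intro c a ha y hy
    obtain ⟨r, hr⟩ := ha y hy
    refine ⟨c * r, ?_⟩
    rw [map_mul, hr, Algebra.smul_def]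
    ring

/-- Let `(R, m)` be a one-dimensional Cohen-Macaulay local ring and `I` a
regular ideal.  If `R : I ⊆ R̄`, i.e. every `α ∈ Q(R)` with `αI ⊆ R` is integral over `R`,
then `I` is a reduction of `tr_R(I)`: `tr_R(I)^(n+1) = I · tr_R(I)^n` for some `n > 0`. -/
theorem stmt7 (R : Type*) [CommRing R] [IsNoetherianRing R] [IsLocalRing R]
    (hdim : ringKrullDim R = 1)
    (hdepth : ∃ x ∈ IsLocalRing.maximalIdeal R, x ∈ nonZeroDivisors R)
    (I : Ideal R) (hreg : ∃ x ∈ I, x ∈ nonZeroDivisors R)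
    (hcol : ∀ α : FractionRing R,
      (∀ y ∈ I, ∃ r : R,
        algebraMap R (FractionRing R) r = α * algebraMap R (FractionRing R) y) →
      α ∈ integralClosure R (FractionRing R)) :
    ∃ n : ℕ, 0 < n ∧ (traceIdeal R ↥I) ^ (n + 1) = I * (traceIdeal R ↥I) ^ n := by
  classical
  set Q := FractionRing R with hQ
  set ℓ : R →ₗ[R] Q := (Algebra.ofId R Q).toLinearMap with hℓ
  have hℓapp : ∀ r : R, ℓ r = algebraMap R Q r := fun r => rfl
  have hinj : Function.Injective ℓ := IsFractionRing.injective R Q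
  set T : Submodule R Q := colonSub R I with hT
  have hTmem : ∀ α : Q, α ∈ T ↔ ∀ y ∈ I, ∃ r : R,
      algebraMap R Q r = α * algebraMap R Q y := fun α => Iff.rfl
  obtain ⟨a, haI, haz⟩ := hreg
  have ua : IsUnit (algebraMap R Q a) :=
    IsLocalization.map_units (M := nonZeroDivisors R) Q ⟨a, haz⟩
  -- Step 1: ι (traceIdeal) = T * ι I
  have key : Submodule.map ℓ (traceIdeal R ↥I) = T * Submodule.map ℓ I := by
    rw [traceIdeal, Submodule.map_iSup]
    apply le_antisymm
    · apply iSup_le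
      intro f
      -- f ↦ α := f(a)/a
      set α : Q := ↑ua.unit⁻¹ * algebraMap R Q (f ⟨a, haI⟩) with hα
      have keyf : ∀ x : ↥I, algebraMap R Q (f x) = α * algebraMap R Q (x : R) := by
        intro x
        have h1 : a • x = (x : R) • (⟨a, haI⟩ : ↥I) := Subtype.ext (by
          simp [smul_eq_mul, mul_comm])
        have h2 : a * f x = (x : R) * f ⟨a, haI⟩ := by
          rw [← smul_eq_mul, ← smul_eq_mul, ← map_smul, h1, map_smul]
        have h3 : algebraMap R Q a * algebraMap R Q (f x)
            = algebraMap R Q (x : R) * algebraMap R Q (f ⟨a, haI⟩) := by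
          rw [← map_mul, ← map_mul, h2]
        calc algebraMap R Q (f x)
            = ↑ua.unit⁻¹ * (algebraMap R Q a * algebraMap R Q (f x)) := by
              rw [← mul_assoc, IsUnit.val_inv_mul, one_mul]
          _ = α * algebraMap R Q (x : R) := by rw [h3, hα]; ring
      have hαT : α ∈ T := by
        rw [hTmem]
        intro y hy
        exact ⟨f ⟨y, hy⟩, keyf ⟨y, hy⟩⟩
      rintro _ ⟨_, ⟨x, rfl⟩, rfl⟩
      rw [hℓapp, keyf]
      exact Submodule.mul_mem_mul hαT ⟨(x : R), x.2, rfl⟩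
    · rw [Submodule.mul_le]
      rintro α hαT _ ⟨x, hx, rfl⟩
      have hα := (hTmem α).1 hαT
      have hgspec : ∀ z : ↥I,
          algebraMap R Q (Classical.choose (hα (z : R) z.2)) = α * algebraMap R Q (z : R) :=
        fun z => Classical.choose_spec (hα (z : R) z.2)
      set g : ↥I →ₗ[R] R :=
        { toFun := fun z => Classical.choose (hα (z : R) z.2)
          map_add' := by
            intro z w
            apply hinj
            show algebraMap R Q (Classical.choose (hα ((z + w : ↥I) : R) (z + w).2))
              = algebraMap R Q (Classical.choose (hα (z : R) z.2)
                + Classical.choose (hα (w : R) w.2))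
            rw [map_add, hgspec, hgspec, hgspec,
              show ((z + w : ↥I) : R) = (z : R) + (w : R) from rfl, map_add]
            ring
          map_smul' := by
            intro c z
            apply hinj
            show algebraMap R Q (Classical.choose (hα ((c • z : ↥I) : R) (c • z).2))
              = algebraMap R Q (c • Classical.choose (hα (z : R) z.2))
            rw [smul_eq_mul, map_mul, hgspec, hgspec,
              show ((c • z : ↥I) : R) = c * (z : R) from rfl, map_mul]
            ring } with hg
      have heq : α * ℓ x = ℓ (g ⟨x, hx⟩) := by
        rw [hℓapp, hℓapp]
        exact (hgspec ⟨x, hx⟩).symm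
      rw [heq]
      refine Submodule.mem_iSup_of_mem g ?_
      exact Submodule.mem_map_of_mem (LinearMap.mem_range_self g ⟨x, hx⟩)
  -- Step 2: the powers of T stabilize
  have honeT : (1 : Q) ∈ T := by
    rw [hTmem]
    intro y hy
    exact ⟨y, by rw [one_mul]⟩
  have hmono : Monotone (fun n => T ^ n) := by
    apply monotone_nat_of_le_succ
    intro n
    calc T ^ n = T ^ n * 1 := by rw [mul_one]
      _ ≤ T ^ n * T := mul_le_mul' le_rfl (Submodule.one_le.2 honeT)
      _ = T ^ (n + 1) := by rw [pow_succ]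
  -- T is contained in a cyclic module, hence finitely generated
  have hTfg : T.FG := by
    have hTle : T ≤ Submodule.span R {(↑ua.unit⁻¹ : Q)} := by
      intro α hαT
      obtain ⟨r, hr⟩ := (hTmem α).1 hαT a haI
      have : α = r • (↑ua.unit⁻¹ : Q) := by
        rw [Algebra.smul_def]
        calc α = ↑ua.unit⁻¹ * (α * algebraMap R Q a) := by
              rw [mul_comm α, ← mul_assoc, IsUnit.val_inv_mul, one_mul]
          _ = algebraMap R Q r * ↑ua.unit⁻¹ := by rw [← hr]; ring
      rw [this]
      exact Submodule.smul_mem _ _ (Submodule.mem_span_singleton_self _)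
    haveI : IsNoetherian R (Submodule.span R {(↑ua.unit⁻¹ : Q)}) :=
      isNoetherian_of_fg_of_noetherian _ (Submodule.fg_span_singleton _)
    have := IsNoetherian.noetherian
      (Submodule.comap (Submodule.span R {(↑ua.unit⁻¹ : Q)}).subtype T)
    have hmap := this.map (Submodule.span R {(↑ua.unit⁻¹ : Q)}).subtype
    rwa [Submodule.map_comap_eq_self (by rw [Submodule.range_subtype]; exact hTle)] at hmap
  obtain ⟨s, hs⟩ := hTfg
  -- all powers of T live inside the (finite) module generated by adjoining s
  set A : Submodule R Q := Subalgebra.toSubmodule (Algebra.adjoin R (↑s : Set Q)) with hA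
  have hAfg : A.FG := fg_adjoin_of_finite s.finite_toSet (by
    intro x hx
    apply hcol
    intro y hy
    have : x ∈ T := by rw [← hs]; exact Submodule.subset_span hx
    exact (hTmem x).1 this y hy)
  have hTleA : T ≤ A := by
    rw [← hs, hA, Submodule.span_le]
    exact fun x hx => Algebra.subset_adjoin hx
  have hpow : ∀ n, T ^ n ≤ A := by
    intro n
    induction n with
    | zero =>
      rw [pow_zero]
      exact Submodule.one_le.2 (Subalgebra.one_mem _)
    | succ n ih =>
      rw [pow_succ]
      refine le_trans (mul_le_mul' ih hTleA) ?_
      rw [Submodule.mul_le]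
      exact fun x hx y hy => Subalgebra.mul_mem _ hx hy
  haveI : IsNoetherian R A := isNoetherian_of_fg_of_noetherian _ hAfg
  obtain ⟨n, hn⟩ := monotone_stabilizes_iff_noetherian.2 ‹IsNoetherian R ↥A›
    ⟨fun k => Submodule.comap A.subtype (T ^ k), fun i j hij =>
      Submodule.comap_mono (hmono hij)⟩
  have hstab : T ^ (n + 2) = T ^ (n + 1) := by
    have h1 := hn (n + 1) (by omega)
    have h2 := hn (n + 2) (by omega)
    have e : Submodule.comap A.subtype (T ^ (n + 2))
        = Submodule.comap A.subtype (T ^ (n + 1)) := by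
      exact h2.symm.trans h1
    have e2 := congrArg (Submodule.map A.subtype) e
    rwa [Submodule.map_comap_eq_self (by rw [Submodule.range_subtype]; exact hpow _),
      Submodule.map_comap_eq_self (by rw [Submodule.range_subtype]; exact hpow _)] at e2
  -- Assemble
  refine ⟨n + 1, by omega, ?_⟩
  apply Submodule.map_injective_of_injective hinj
  have hmul : ∀ J K : Ideal R, Submodule.map ℓ (J * K)
      = Submodule.map ℓ J * Submodule.map ℓ K := fun J K => Submodule.map_mul J K _
  have hpw : ∀ (J : Ideal R) (k : ℕ), Submodule.map ℓ (J ^ k) = (Submodule.map ℓ J) ^ k :=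
    fun J k => Submodule.map_pow J _ k
  rw [hmul, hpw, hpw, key, mul_pow, mul_pow, hstab]
  ring
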